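/- Let (X, d) be a complete separable metric space, T an (r,r)-net on X, and R ≥ r. If X admits a (2R+r, D)-cover with m layers, then T admits an (R, 2R+2r+D)-padded decomposition with m layers. -/
import Mathlib


open Metric

/-- A family of sets is `r`-disjoint: distinct members are at distance `> r`. -/
def RDisjointFam {X : Type*} [MetricSpace X] (r : ℝ) (U : Set (Set X)) : Prop :=
  ∀ A ∈ U, ∀ B ∈ U, A ≠ B → ∀ a ∈ A, ∀ b ∈ B, r < dist a b

/-- A family of sets is `D`-bounded: each member has diameter at most `D`. -/
def DBoundedFam {X : Type*} [MetricSpace X] (D : ℝ) (U : Set (Set X)) : Prop :=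
  ∀ A ∈ U, ∀ a ∈ A, ∀ b ∈ A, dist a b ≤ D

/-- An `(r, D)`-cover of `X` with `m` layers. -/
def IsCover {X : Type*} [MetricSpace X] (r D : ℝ) {m : ℕ} (U : Fin m → Set (Set X)) : Prop :=
  (∀ i, RDisjointFam r (U i)) ∧ (∀ i, DBoundedFam D (U i)) ∧ ∀ x : X, ∃ i, ∃ A ∈ U i, x ∈ A

/-- An `(R, D)`-padded decomposition with `m` layers associated to the net `T`:
each layer partitions `T` (covers `T`, members pairwise disjoint on `T`), is `D`-bounded,
and every `x ∈ T` has its `R`-ball contained in some member of some layer. -/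
def IsPaddedDecomposition {X : Type*} [MetricSpace X] (T : Set X) (R D : ℝ) {m : ℕ}
    (P : Fin m → Set (Set X)) : Prop :=
  (∀ i, T ⊆ ⋃₀ (P i)) ∧
  (∀ i, ∀ A ∈ P i, ∀ B ∈ P i, A ≠ B → A ∩ B ∩ T = ∅) ∧
  (∀ i, DBoundedFam D (P i)) ∧
  (∀ x ∈ T, ∃ i, ∃ C ∈ P i, ball x R ⊆ C)

/-- If a complete separable metric space `X` with an `(r,r)`-net `T` admits a `(2R+r, D)`-cover
with `m` layers, then `T` admits an `(R, 2R+2r+D)`-padded decomposition with `m` layers. -/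
theorem cover_to_padded {X : Type*} [MetricSpace X] [CompleteSpace X]
    [TopologicalSpace.SeparableSpace X]
    (T : Set X) (r : ℝ) (hr : 0 < r)
    (hsep : ∀ x ∈ T, ∀ y ∈ T, x ≠ y → r ≤ dist x y)
    (hcov : ∀ x : X, ∃ y ∈ T, dist x y < r)
    (R : ℝ) (hR : r ≤ R) (D : ℝ) (m : ℕ)
    (hU : ∃ U : Fin m → Set (Set X), IsCover (2 * R + r) D U) :
    ∃ P : Fin m → Set (Set X), IsPaddedDecomposition T R (2 * R + 2 * r + D) P := by
  obtain ⟨U, hdisj, hbdd, hcover⟩ := hU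
  set N : Set X → Set X := fun A => {y | ∃ a ∈ A, dist y a < R + r / 2} with hNdef
  refine ⟨fun i => (N '' U i) ∪ {S | ∃ x ∈ T, x ∉ ⋃₀ (N '' U i) ∧ S = {x}}, ?_, ?_, ?_, ?_⟩
  · intro i x hx
    by_cases h : x ∈ ⋃₀ (N '' U i)
    · obtain ⟨S, hS, hxS⟩ := h
      exact ⟨S, Or.inl hS, hxS⟩
    · exact ⟨{x}, Or.inr ⟨x, hx, h, rfl⟩, rfl⟩
  · intro i M hM K hK hne
    ext y
    simp only [Set.mem_inter_iff, Set.mem_empty_iff_false, iff_false]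
    rintro ⟨⟨hyM, hyK⟩, hyT⟩
    rcases hM with ⟨A, hA, rfl⟩ | ⟨x1, hx1T, hx1n, rfl⟩ <;>
      rcases hK with ⟨B, hB, rfl⟩ | ⟨x2, hx2T, hx2n, rfl⟩
    · have hAB : A ≠ B := fun h => hne (by rw [h])
      obtain ⟨a, ha, hya⟩ := hyM
      obtain ⟨b, hb, hyb⟩ := hyK
      have h1 := hdisj i A hA B hB hAB a ha b hb
      have h2 : dist a b ≤ dist a y + dist y b := dist_triangle a y b
      rw [dist_comm a y] at h2
      linarith
    · have : y = x2 := hyK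
      subst this
      exact hx2n ⟨N A, ⟨A, hA, rfl⟩, hyM⟩
    · have : y = x1 := hyM
      subst this
      exact hx1n ⟨N B, ⟨B, hB, rfl⟩, hyK⟩
    · have h1 : y = x1 := hyM
      have h2 : y = x2 := hyK
      exact hne (by rw [← h1, ← h2])
  · intro i S hS a ha b hb
    rcases hS with ⟨A, hA, rfl⟩ | ⟨x, hxT, hxn, rfl⟩
    · obtain ⟨p, hp, hap⟩ := ha
      obtain ⟨q, hq, hbq⟩ := hb
      have hpq := hbdd i A hA p hp q hq
      have := dist_triangle4 a p q b
      rw [dist_comm q b] at this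
      linarith
    · have h1 : a = x := ha
      have h2 : b = x := hb
      obtain ⟨j, A, hA, hxA⟩ := hcover x
      have hD : (0:ℝ) ≤ D := by simpa using hbdd j A hA x hxA x hxA
      rw [h1, h2, dist_self]
      linarith
  · intro x hx
    obtain ⟨i, A, hA, hxA⟩ := hcover x
    refine ⟨i, N A, Or.inl ⟨A, hA, rfl⟩, fun y hy => ⟨x, hxA, ?_⟩⟩
    have : dist y x < R := mem_ball.mp hy
    linarith
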